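/- Let V_kᵀ ∈ ℝ^{k×d} have orthonormal rows, and for i ≥ 1 let Π_{i−1} be the orthogonal projection onto the orthogonal complement of span(v_{j₁},…,v_{j_{i−1}}) where v_j denotes column j of V_kᵀ. Define Z_i = Π_{i−1}V_kᵀ. Then ‖Z_i‖_F² ≥ k − i + 1, and hence the column of Z_i of maximal Euclidean norm has squared norm at least (k − i + 1)/d. -/

import Mathlib

open Matrix

noncomputable def frobSq {m n : Type*} [Fintype m] [Fintype n] (A : Matrix m n ℝ) : ℝ :=
  ∑ i, ∑ j, (A i j) ^ 2

/-- If `Vₖᵀ` has orthonormal rows and `Π_{i−1}` is the orthogonal projection onto the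
orthogonal complement of the span of `i−1` chosen columns of `Vₖᵀ`, then
`Zᵢ = Π_{i−1} Vₖᵀ` satisfies `‖Zᵢ‖_F² ≥ k − i + 1`, and hence some column of `Zᵢ`
has squared norm at least `(k − i + 1)/d`. -/
theorem stmt11 {k d : ℕ} (i : ℕ) (hi : 1 ≤ i) (hik : i ≤ k)
    (V : Matrix (Fin k) (Fin d) ℝ) (hV : V * Vᵀ = 1)
    (cols : Fin (i - 1) → Fin d)
    (P : Matrix (Fin k) (Fin k) ℝ) (hP1 : P * P = P) (hP2 : Pᵀ = P)
    (hker : ∀ a, P.mulVec (fun r => V r (cols a)) = 0)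
    (hfix : ∀ x : Fin k → ℝ, (∀ a, ∑ r, x r * V r (cols a) = 0) → P.mulVec x = x) :
    ((k : ℝ) - i + 1) ≤ frobSq (P * V) ∧
      ∃ j : Fin d, ((k : ℝ) - i + 1) / d ≤ ∑ r, ((P * V) r j) ^ 2 := by
  classical
  set Q : Matrix (Fin k) (Fin k) ℝ := 1 - P with hQdef
  have hQ2 : Q * Q = Q := by
    rw [hQdef, Matrix.sub_mul, Matrix.mul_sub, Matrix.mul_sub, Matrix.one_mul, Matrix.mul_one,
      hP1, sub_self, sub_zero, Matrix.one_mul]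
  -- frobSq (P*V) = trace P
  have hfrob : frobSq (P * V) = Matrix.trace P := by
    have h1 : (P * V) * (P * V)ᵀ = P := by
      rw [Matrix.transpose_mul]
      calc P * V * (Vᵀ * Pᵀ) = P * (V * Vᵀ) * Pᵀ := by
            rw [← Matrix.mul_assoc, Matrix.mul_assoc P V Vᵀ]
        _ = P := by rw [hV, Matrix.mul_one, hP2, hP1]
    have h2 : Matrix.trace ((P * V) * (P * V)ᵀ) = frobSq (P * V) := by
      simp only [Matrix.trace, Matrix.diag, Matrix.mul_apply, Matrix.transpose_apply, frobSq, sq]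
    rw [← h2, h1]
  -- the Euclidean setup
  set f : EuclideanSpace ℝ (Fin k) →ₗ[ℝ] EuclideanSpace ℝ (Fin k) :=
    Matrix.toEuclideanLin Q with hfdef
  have hf_apply : ∀ x : EuclideanSpace ℝ (Fin k), f x = (WithLp.equiv 2 (Fin k → ℝ)).symm
      (Q.mulVec ((WithLp.equiv 2 (Fin k → ℝ)) x)) := fun x => rfl
  have hQmul : ∀ x : Fin k → ℝ, (∀ a, ∑ r, x r * V r (cols a) = 0) → Q.mulVec x = 0 := by
    intro x hx
    simp [hQdef, Matrix.sub_mulVec, hfix x hx]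
  -- range of f is contained in span of the chosen columns
  set w : Fin (i - 1) → EuclideanSpace ℝ (Fin k) := fun a => (WithLp.equiv 2 (Fin k → ℝ)).symm (fun r => V r (cols a))
    with hwdef
  set S : Submodule ℝ (EuclideanSpace ℝ (Fin k)) := Submodule.span ℝ (Set.range w) with hSdef
  haveI : FiniteDimensional ℝ S := FiniteDimensional.span_of_finite ℝ (Set.finite_range w)
  have hrange : LinearMap.range f ≤ S := by
    rintro _ ⟨x, rfl⟩
    rw [← Submodule.orthogonal_orthogonal S]
    intro u hu
    -- u is orthogonal to every w a, so Q *ᵥ u = 0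
    have hu0 : Q.mulVec ((WithLp.equiv 2 (Fin k → ℝ)) u) = 0 := by
      apply hQmul
      intro a
      have := hu (w a) (Submodule.subset_span ⟨a, rfl⟩)
      simpa [hwdef, PiLp.inner_apply, mul_comm] using this
    have hsym : ∀ y z : Fin k → ℝ, (Q.mulVec y) ⬝ᵥ z = y ⬝ᵥ (Q.mulVec z) := by
      intro y z
      have hQt : Qᵀ = Q := by simp [hQdef, Matrix.transpose_sub, hP2]
      have h2 : Matrix.vecMul y Q = Q.mulVec y := by
        conv_lhs => rw [← hQt]
        rw [Matrix.vecMul_transpose]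
      rw [Matrix.dotProduct_mulVec, h2]
    have : inner ℝ u (f x) = (0 : ℝ) := by
      have : inner ℝ u (f x) = ((WithLp.equiv 2 (Fin k → ℝ)) u) ⬝ᵥ
          (Q.mulVec ((WithLp.equiv 2 (Fin k → ℝ)) x)) := by
        rw [hf_apply]
        simp [PiLp.inner_apply, RCLike.inner_apply, dotProduct, starRingEnd_apply, mul_comm]
      rw [this, ← hsym, hu0, zero_dotProduct]
    exact this
  -- f is a projection onto its range
  have hproj : LinearMap.IsProj (LinearMap.range f) f := by
    constructor
    · intro x; exact ⟨x, rfl⟩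
    · rintro _ ⟨y, rfl⟩
      rw [hf_apply, hf_apply]
      simp only [Equiv.apply_symm_apply]
      rw [Matrix.mulVec_mulVec, hQ2]
  -- trace bound
  have htraceQ : Matrix.trace Q = (Module.finrank ℝ (LinearMap.range f) : ℝ) := by
    rw [← hproj.trace]
    rw [hfdef, Matrix.toEuclideanLin_eq_toLin,
      LinearMap.trace_eq_matrix_trace ℝ (PiLp.basisFun 2 ℝ (Fin k)), LinearMap.toMatrix_toLin]
  have hrank : Module.finrank ℝ (LinearMap.range f) ≤ i - 1 := by
    calc Module.finrank ℝ (LinearMap.range f) ≤ Module.finrank ℝ S := Submodule.finrank_mono hrange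
      _ ≤ Fintype.card (Fin (i - 1)) := finrank_range_le_card w
      _ = i - 1 := Fintype.card_fin _
  have htQ : Matrix.trace Q ≤ (i : ℝ) - 1 := by
    rw [htraceQ]
    have : ((i - 1 : ℕ) : ℝ) = (i : ℝ) - 1 := by
      rw [Nat.cast_sub hi]; norm_num
    rw [← this]
    exact_mod_cast hrank
  have htP : ((k : ℝ) - i + 1) ≤ Matrix.trace P := by
    have h1 : Matrix.trace Q = (k : ℝ) - Matrix.trace P := by
      simp [hQdef, Matrix.trace_sub, Matrix.trace_one]
    have := htQ
    rw [h1] at this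
    linarith
  have hmain : ((k : ℝ) - i + 1) ≤ frobSq (P * V) := by rw [hfrob]; exact htP
  refine ⟨hmain, ?_⟩
  -- pigeonhole
  have hd : 0 < d := by
    by_contra hd
    push_neg at hd
    interval_cases d
    have h0 : frobSq (P * V) = 0 := by simp [frobSq]
    rw [h0] at hmain
    have : (i : ℝ) ≤ k := by exact_mod_cast hik
    linarith
  by_contra hcon
  push_neg at hcon
  have hsum : frobSq (P * V) = ∑ j, ∑ r, ((P * V) r j) ^ 2 := Finset.sum_comm
  have hlt : ∑ j : Fin d, ∑ r, ((P * V) r j) ^ 2 <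
      ∑ _j : Fin d, ((k : ℝ) - i + 1) / d := by
    apply Finset.sum_lt_sum_of_nonempty
    · exact Finset.univ_nonempty_iff.mpr ⟨⟨0, hd⟩⟩
    · intro j _; exact hcon j
  have : ∑ _j : Fin d, ((k : ℝ) - i + 1) / d = ((k : ℝ) - i + 1) := by
    rw [Finset.sum_const, Finset.card_univ, Fintype.card_fin, nsmul_eq_mul]
    field_simp
  rw [this] at hlt
  rw [hsum] at hmain
  linarith
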